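/- Energy decay for the hereditary-integral viscoelastic model (Remark 3.3(ii)): let α ≥ 1, and let (u, φ) : [0, T] → X × Ψ be continuously differentiable with u(t) ∈ g + V for all t, satisfying for all t ∈ (0, T): (a) ⟪C(e u(t) − φ(t)), e v⟫_Ψ = ℓ(v) for all v ∈ V, and (b) φ'(t) + α φ(t) = e u(t) in Ψ. Then t ↦ Ẽ(u(t), φ(t)) is differentiable on (0, T) and (d/dt) Ẽ(u(t), φ(t)) = −⟪C φ'(t), φ'(t)⟫_Ψ ≤ 0. -/

import Mathlib

open scoped RealInnerProductSpace

/-- Energy decay for the hereditary-integral viscoelastic model (Remark 3.3(ii)):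
for `α ≥ 1` and a C¹ solution `(u, φ)` of the model, `t ↦ Ẽ(u(t), φ(t))` is
differentiable on `(0, T)` with derivative `−⟪C φ'(t), φ'(t)⟫ ≤ 0`. -/
theorem stmt_17
    {X Ψ : Type*}
    [NormedAddCommGroup X] [InnerProductSpace ℝ X] [CompleteSpace X]
    [NormedAddCommGroup Ψ] [InnerProductSpace ℝ Ψ] [CompleteSpace Ψ]
    (V : Submodule ℝ X) (hV : IsClosed (V : Set X))
    (e : X →L[ℝ] Ψ) (C : Ψ →L[ℝ] Ψ)
    (hCsym : ∀ φ ψ : Ψ, ⟪C φ, ψ⟫ = ⟪φ, C ψ⟫)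
    (cstar : ℝ) (hcstar : 0 < cstar)
    (hCcoer : ∀ ψ : Ψ, cstar * ‖ψ‖ ^ 2 ≤ ⟪C ψ, ψ⟫)
    (c₀ : ℝ) (hc₀ : 0 < c₀)
    (hacoer : ∀ v ∈ V, c₀ * ‖v‖ ^ 2 ≤ ⟪C (e v), e v⟫)
    (ℓ : X →L[ℝ] ℝ) (g : X) (α : ℝ) (hα : 1 ≤ α)
    (Et : X → Ψ → ℝ)
    (hEt : ∀ u φ, Et u φ =
      (1 / 2) * ⟪C (e u - φ), e u - φ⟫ + ((α - 1) / 2) * ⟪C φ, φ⟫ - ℓ u)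
    (T : ℝ) (hT : 0 < T)
    (u : ℝ → X) (φ : ℝ → Ψ) (u' : ℝ → X) (φ' : ℝ → Ψ)
    (hu_deriv : ∀ t ∈ Set.Icc (0 : ℝ) T, HasDerivAt u (u' t) t)
    (hφ_deriv : ∀ t ∈ Set.Icc (0 : ℝ) T, HasDerivAt φ (φ' t) t)
    (hu'_cont : ContinuousOn u' (Set.Icc (0 : ℝ) T))
    (hφ'_cont : ContinuousOn φ' (Set.Icc (0 : ℝ) T))
    (hu_mem : ∀ t ∈ Set.Icc (0 : ℝ) T, u t - g ∈ V)
    (heq1 : ∀ t ∈ Set.Ioo (0 : ℝ) T, ∀ v ∈ V, ⟪C (e (u t) - φ t), e v⟫ = ℓ v)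
    (heq2 : ∀ t ∈ Set.Ioo (0 : ℝ) T, φ' t + α • φ t = e (u t)) :
    ∀ t ∈ Set.Ioo (0 : ℝ) T,
      HasDerivAt (fun s : ℝ => Et (u s) (φ s)) (-⟪C (φ' t), φ' t⟫) t ∧
      -⟪C (φ' t), φ' t⟫ ≤ 0 := by
  intro t ht
  have htIcc : t ∈ Set.Icc (0 : ℝ) T := Set.mem_Icc_of_Ioo ht
  have hu := hu_deriv t htIcc
  have hφ := hφ_deriv t htIcc
  have heu : HasDerivAt (fun s => e (u s)) (e (u' t)) t :=
    (e.hasFDerivAt).comp_hasDerivAt t hu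
  have hψ : HasDerivAt (fun s => e (u s) - φ s) (e (u' t) - φ' t) t := heu.sub hφ
  have hCψ : HasDerivAt (fun s => C (e (u s) - φ s)) (C (e (u' t) - φ' t)) t :=
    (C.hasFDerivAt).comp_hasDerivAt t hψ
  have hCφ : HasDerivAt (fun s => C (φ s)) (C (φ' t)) t :=
    (C.hasFDerivAt).comp_hasDerivAt t hφ
  have h1 : HasDerivAt (fun s => ⟪C (e (u s) - φ s), e (u s) - φ s⟫)
      (⟪C (e (u t) - φ t), e (u' t) - φ' t⟫ + ⟪C (e (u' t) - φ' t), e (u t) - φ t⟫) t :=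
    hCψ.inner ℝ hψ
  have h2 : HasDerivAt (fun s => ⟪C (φ s), φ s⟫)
      (⟪C (φ t), φ' t⟫ + ⟪C (φ' t), φ t⟫) t := hCφ.inner ℝ hφ
  have h3 : HasDerivAt (fun s => ℓ (u s)) (ℓ (u' t)) t :=
    (ℓ.hasFDerivAt).comp_hasDerivAt t hu
  have hD : HasDerivAt (fun s : ℝ => Et (u s) (φ s))
      ((1 / 2) * (⟪C (e (u t) - φ t), e (u' t) - φ' t⟫ + ⟪C (e (u' t) - φ' t), e (u t) - φ t⟫)
        + ((α - 1) / 2) * (⟪C (φ t), φ' t⟫ + ⟪C (φ' t), φ t⟫) - ℓ (u' t)) t := by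
    have := ((h1.const_mul (1 / 2)).add (h2.const_mul ((α - 1) / 2))).sub h3
    simpa only [hEt, Pi.add_def, Pi.sub_def] using this
  -- u' t ∈ V
  have hu'V : u' t ∈ V := by
    have hw : HasDerivAt (fun s => u s - g) (u' t) t := hu.sub_const g
    rw [hasDerivAt_iff_tendsto_slope] at hw
    have hIoo : Set.Ioo (0 : ℝ) T ∈ nhds t := isOpen_Ioo.mem_nhds ht
    have hev : ∀ᶠ s in nhdsWithin t {t}ᶜ, slope (fun s => u s - g) t s ∈ (V : Set X) := by
      filter_upwards [nhdsWithin_le_nhds hIoo] with s hs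
      have hmem : (u s - g) - (u t - g) ∈ V :=
        V.sub_mem (hu_mem s (Set.mem_Icc_of_Ioo hs)) (hu_mem t htIcc)
      have := V.smul_mem ((s - t)⁻¹) hmem
      simpa [slope_def_module] using this
    have hcl : u' t ∈ closure (V : Set X) := mem_closure_of_tendsto hw hev
    rwa [hV.closure_eq] at hcl
  -- identify the derivative value
  have hsub : e (u t) - φ t = φ' t + (α - 1) • φ t := by
    have := heq2 t ht
    rw [← this]
    module
  have hℓ : ⟪C (e (u t) - φ t), e (u' t)⟫ = ℓ (u' t) := heq1 t ht (u' t) hu'V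
  have hsymm1 : ⟪C (e (u' t) - φ' t), e (u t) - φ t⟫ = ⟪C (e (u t) - φ t), e (u' t) - φ' t⟫ := by
    rw [hCsym, real_inner_comm]
  have hsymm2 : ⟪C (φ' t), φ t⟫ = ⟪C (φ t), φ' t⟫ := by
    rw [hCsym, real_inner_comm]
  have hval : (1 / 2) * (⟪C (e (u t) - φ t), e (u' t) - φ' t⟫ + ⟪C (e (u' t) - φ' t), e (u t) - φ t⟫)
        + ((α - 1) / 2) * (⟪C (φ t), φ' t⟫ + ⟪C (φ' t), φ t⟫) - ℓ (u' t)
      = -⟪C (φ' t), φ' t⟫ := by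
    rw [hsymm1, hsymm2]
    have hexp : ⟪C (e (u t) - φ t), e (u' t) - φ' t⟫
        = ℓ (u' t) - ⟪C (e (u t) - φ t), φ' t⟫ := by
      rw [inner_sub_right, hℓ]
    have hexp2 : ⟪C (e (u t) - φ t), φ' t⟫ = ⟪C (φ' t), φ' t⟫ + (α - 1) * ⟪C (φ t), φ' t⟫ := by
      rw [hsub, map_add, map_smul, inner_add_left, inner_smul_left]
      simp
    rw [hexp, hexp2]
    ring
  refine ⟨hval ▸ hD, ?_⟩
  have h0 : (0 : ℝ) ≤ ⟪C (φ' t), φ' t⟫ :=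
    le_trans (by positivity) (hCcoer (φ' t))
  linarith
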